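/- Let n, a, b, t be positive integers with a ≤ n, b ≤ n and a + b < n + t. Then N_prod(n,a,b,t) ≤ n³ · exp(2 · h((a + b − 2t)/(2n)) · n), where h is the binary entropy function. -/

import Mathlib

open Finset

/-- The ground set `[n] = {1,…,n}`. -/
def gs (n : ℕ) : Finset ℕ := Finset.Icc 1 n

/-- `F` is an `m`-uniform family of subsets of `[n]`. -/
def UniformOn (n m : ℕ) (F : Finset (Finset ℕ)) : Prop :=
  ∀ A ∈ F, A ⊆ gs n ∧ A.card = m

/-- `F` and `G` are cross-`t`-intersecting. -/
def CrossInt (t : ℕ) (F G : Finset (Finset ℕ)) : Prop :=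
  ∀ A ∈ F, ∀ B ∈ G, t ≤ (A ∩ B).card

/-- The maximum of `|F| ⬝ |G|` over cross-`t`-intersecting pairs where `F` is an
`a`-uniform family and `G` a `b`-uniform family of subsets of `[n]`. -/
noncomputable def NProd (n a b t : ℕ) : ℕ :=
  sSup {x : ℕ | ∃ F G : Finset (Finset ℕ),
    UniformOn n a F ∧ UniformOn n b G ∧ CrossInt t F G ∧ x = F.card * G.card}


section helperLemmas


lemma vdm_term (x y i j : ℕ) : x.choose i * y.choose j ≤ (x + y).choose (i + j) := by
  rw [Nat.add_choose_eq]
  exact Finset.single_le_sum (f := fun ij : ℕ × ℕ => x.choose ij.1 * y.choose ij.2)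
    (fun p _ => Nat.zero_le _) (a := (i, j)) (Finset.HasAntidiagonal.mem_antidiagonal.mpr rfl)

lemma CH (n a b : ℕ) (h : a + b ≤ n) :
    n.choose a * (n - a).choose b = n.choose (a + b) * (a + b).choose a := by
  have := Nat.choose_mul (n := n) (k := a + b) (s := a) (Nat.le_add_right a b)
  simpa [Nat.add_sub_cancel_left] using this.symm

lemma choose_mono_half (N : ℕ) : ∀ d u, 2 * (u + d) ≤ N → N.choose u ≤ N.choose (u + d) := by
  intro d
  induction d with
  | zero => intro u _; simp
  | succ d ih =>
    intro u h
    have h1 : N.choose u ≤ N.choose (u + d) := ih u (by omega)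
    have h2 : N.choose (u + d) ≤ N.choose (u + d + 1) :=
      Nat.choose_le_succ_of_lt_half_left (by omega)
    calc N.choose u ≤ N.choose (u + d) := h1
      _ ≤ N.choose (u + d + 1) := h2
      _ = N.choose (u + (d + 1)) := by ring_nf

-- the "symmetric swap": C(M,a)*C(M-a,b) = C(M,b)*C(M-b,a) (multinomial symmetry)
lemma CHswap (M a b : ℕ) (h : a + b ≤ M) :
    M.choose a * (M - a).choose b = M.choose b * (M - b).choose a := by
  rw [CH M a b h, CH M b a (by omega), Nat.add_comm b a,
    Nat.choose_symm_add]

-- Lemma A per-term bound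
lemma lemA_term (m j k : ℕ) (hp : j + k ≤ m) :
    m.choose j * ((m - j).choose j * (m - 2 * j).choose k) ≤
      m.choose (j + k) * m.choose (j + k) := by
  by_cases h2 : 2 * j + k ≤ m
  · have e0 : m - 2 * j = (m - j) - j := by omega
    have e1 : (m - j).choose j * ((m - j) - j).choose k
        = (m - j).choose k * ((m - j) - k).choose j := CHswap (m - j) j k (by omega)
    have e2 : m.choose j * (m - j).choose k * ((m - j) - k).choose j
        = m.choose (j + k) * (j + k).choose j * (m - (j + k)).choose j := by
      rw [CH m j k (by omega)]
      congr 2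
      omega
    calc m.choose j * ((m - j).choose j * (m - 2 * j).choose k)
        = m.choose j * (m - j).choose k * ((m - j) - k).choose j := by
          rw [e0, e1]; ring
      _ = m.choose (j + k) * ((j + k).choose j * (m - (j + k)).choose j) := by
          rw [e2]; ring
      _ ≤ m.choose (j + k) * m.choose (j + k) := by
          apply Nat.mul_le_mul_left
          have : (j + k).choose j = (j + k).choose k := Nat.choose_symm_add
          rw [this]
          have h3 := vdm_term (j + k) (m - (j + k)) k j
          calc (j + k).choose k * (m - (j + k)).choose j ≤ (j + k + (m - (j+k))).choose (k + j) := h3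
            _ = m.choose (j + k) := by congr 1 <;> omega
  · -- some factor is zero
    have : m.choose j * ((m - j).choose j * (m - 2 * j).choose k) = 0 := by
      rcases Nat.lt_or_ge m j with h | h
      · rw [Nat.choose_eq_zero_of_lt h]; ring
      · rcases Nat.lt_or_ge (m - j) j with h' | h'
        · rw [Nat.choose_eq_zero_of_lt h']; ring
        · have : m - 2 * j < k := by omega
          rw [Nat.choose_eq_zero_of_lt this]; ring
    omega

-- Main assembly per-term bound
lemma main_term (n i j k s : ℕ) (h1 : i + j + k ≤ n) (h2 : i + j + 2 * k ≤ s) (h3 : s ≤ n) :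
    n.choose i * ((n - i).choose j * ((n - i) - j).choose k) ≤ (2 * n).choose s := by
  have e1 : (n - i).choose j * ((n - i) - j).choose k
      = (n - i).choose k * ((n - i) - k).choose j := CHswap (n - i) j k (by omega)
  have e2 : n.choose i * (n - i).choose k = n.choose (i + k) * (i + k).choose i :=
    CH n i k (by omega)
  have e3 : (i + k).choose i = (i + k).choose k := Nat.choose_symm_add
  calc n.choose i * ((n - i).choose j * ((n - i) - j).choose k)
      = n.choose i * (n - i).choose k * ((n - i) - k).choose j := by rw [e1]; ring
    _ = n.choose (i + k) * ((i + k).choose k * (n - (i + k)).choose j) := by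
        rw [e2, e3]
        have : (n - i) - k = n - (i + k) := by omega
        rw [this]; ring
    _ ≤ n.choose (i + k) * n.choose (j + k) := by
        apply Nat.mul_le_mul_left
        have h4 := vdm_term (i + k) (n - (i + k)) k j
        calc (i + k).choose k * (n - (i + k)).choose j
            ≤ (i + k + (n - (i + k))).choose (k + j) := h4
          _ = n.choose (j + k) := by congr 1 <;> omega
    _ ≤ (2 * n).choose (i + k + (j + k)) := by
        have := vdm_term n n (i + k) (j + k)
        calc n.choose (i + k) * n.choose (j + k) ≤ (n + n).choose (i + k + (j + k)) := this
          _ = (2 * n).choose (i + k + (j + k)) := by congr 1; omega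
    _ ≤ (2 * n).choose s := by
        have h5 : i + k + (j + k) + (s - (i + k + (j + k))) = s := by omega
        have := choose_mono_half (2 * n) (s - (i + k + (j + k))) (i + k + (j + k)) (by omega)
        rwa [h5] at this



-- counting disjoint pairs of given sizes
lemma pair_count (M : Finset ℕ) (P : Finset (Finset ℕ × Finset ℕ)) (i j : ℕ)
    (hP : ∀ p ∈ P, p.1 ⊆ M ∧ p.2 ⊆ M ∧ Disjoint p.1 p.2 ∧ p.1.card = i ∧ p.2.card = j) :
    P.card ≤ M.card.choose i * (M.card - i).choose j := by
  classical
  have hmap : ∀ p ∈ P, p.1 ∈ M.powersetCard i := by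
    intro p hp
    rcases hP p hp with ⟨h1, _, _, h4, _⟩
    exact Finset.mem_powersetCard.mpr ⟨h1, h4⟩
  rw [Finset.card_eq_sum_card_fiberwise hmap]
  have hbound : ∀ X ∈ M.powersetCard i,
      (P.filter fun p => p.1 = X).card ≤ (M.card - i).choose j := by
    intro X hX
    rcases Finset.mem_powersetCard.mp hX with ⟨hXM, hXc⟩
    have : (P.filter fun p => p.1 = X).card ≤ ((M \ X).powersetCard j).card := by
      apply Finset.card_le_card_of_injOn (fun p => p.2)
      · intro p hp
        rcases Finset.mem_filter.mp hp with ⟨hpP, hpX⟩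
        rcases hP p hpP with ⟨_, h2, h3, _, h5⟩
        refine Finset.mem_powersetCard.mpr ⟨?_, h5⟩
        rw [Finset.subset_sdiff]
        exact ⟨h2, (disjoint_comm.mp (hpX ▸ h3))⟩
      · intro p hp q hq hpq
        rcases Finset.mem_filter.mp hp with ⟨_, hp1⟩
        rcases Finset.mem_filter.mp hq with ⟨_, hq1⟩
        exact Prod.ext (hp1.trans hq1.symm) hpq
    calc (P.filter fun p => p.1 = X).card ≤ ((M \ X).powersetCard j).card := this
      _ = (M \ X).card.choose j := by rw [Finset.card_powersetCard]
      _ = (M.card - i).choose j := by rw [Finset.card_sdiff_of_subset hXM, hXc]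
  calc ∑ X ∈ M.powersetCard i, (P.filter fun p => p.1 = X).card
      ≤ ∑ X ∈ M.powersetCard i, (M.card - i).choose j := Finset.sum_le_sum hbound
    _ = M.card.choose i * (M.card - i).choose j := by
        rw [Finset.sum_const, Finset.card_powersetCard, smul_eq_mul]



lemma choose_le_exp_binEntropy (N k : ℕ) (hN : 0 < N) (hk : k ≤ N) :
    ((N.choose k : ℕ) : ℝ) ≤ Real.exp (N * Real.binEntropy ((k : ℝ) / (N : ℝ))) := by
  have hN0 : (N : ℝ) ≠ 0 := Nat.cast_ne_zero.mpr hN.ne'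
  rcases Nat.eq_zero_or_pos k with rfl | hk0
  · simp
  rcases eq_or_lt_of_le hk with rfl | hkN
  · rw [div_self hN0]
    simp
  -- 0 < k < N
  set p : ℝ := (k : ℝ) / N with hp
  have hp0 : 0 < p := by positivity
  have hp1 : p < 1 := by
    rw [hp, div_lt_one (by positivity)]
    exact_mod_cast hkN
  have hq0 : 0 < 1 - p := by linarith
  -- key inequality
  have key : (N.choose k : ℝ) * (p ^ k * (1 - p) ^ (N - k)) ≤ 1 := by
    have hb : (p + (1 - p)) ^ N = ∑ i ∈ Finset.range (N + 1), p ^ i * (1 - p) ^ (N - i) * (N.choose i : ℝ) :=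
      add_pow p (1 - p) N
    have hone : (p + (1 - p)) ^ N = 1 := by
      have : p + (1 - p) = 1 := by ring
      rw [this, one_pow]
    have hterm : p ^ k * (1 - p) ^ (N - k) * (N.choose k : ℝ)
        ≤ ∑ i ∈ Finset.range (N + 1), p ^ i * (1 - p) ^ (N - i) * (N.choose i : ℝ) := by
      apply Finset.single_le_sum (f := fun i => p ^ i * (1 - p) ^ (N - i) * (N.choose i : ℝ))
      · intro i _
        positivity
      · exact Finset.mem_range.mpr (by omega)
    rw [← hb, hone] at hterm
    linarith [hterm]
  have hX : (0 : ℝ) < p ^ k * (1 - p) ^ (N - k) := by positivity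
  have hle : (N.choose k : ℝ) ≤ (p ^ k * (1 - p) ^ (N - k))⁻¹ := by
    rw [← one_div]
    exact (le_div_iff₀ hX).mpr key
  -- identify the inverse with the exponential
  have hNp : (N : ℝ) * p = (k : ℝ) := by
    rw [hp]; field_simp
  have hNq : (N : ℝ) * (1 - p) = ((N - k : ℕ) : ℝ) := by
    rw [hp]; push_cast [hk]; field_simp
  have hexp : (p ^ k * (1 - p) ^ (N - k))⁻¹
      = Real.exp ((N : ℝ) * Real.binEntropy p) := by
    rw [Real.binEntropy]
    have : (N : ℝ) * (p * Real.log p⁻¹ + (1 - p) * Real.log (1 - p)⁻¹)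
        = (k : ℝ) * Real.log p⁻¹ + ((N - k : ℕ) : ℝ) * Real.log (1 - p)⁻¹ := by
      rw [← hNp, ← hNq]; ring
    rw [this, Real.exp_add]
    rw [Real.exp_nat_mul, Real.exp_nat_mul, Real.exp_log (by positivity), Real.exp_log (by positivity)]
    rw [mul_inv, ← inv_pow, ← inv_pow]
  calc ((N.choose k : ℕ) : ℝ) ≤ (p ^ k * (1 - p) ^ (N - k))⁻¹ := hle
    _ = Real.exp ((N : ℝ) * Real.binEntropy p) := hexp

end helperLemmas

/-- Approximate Kleitman bound for uniform `t`-intersecting families. -/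
lemma lemA (t κ : ℕ) (ht : 1 ≤ t) :
    ∀ c, ∀ (M : Finset ℕ) (H : Finset (Finset ℕ)),
      (∀ I ∈ H, I ⊆ M ∧ I.card = c) →
      (∀ I ∈ H, ∀ I' ∈ H, t ≤ (I ∩ I').card) →
      c + 2 ≤ κ + t →
      H.card ≤ κ * ∑ k ∈ Finset.range (c - t + 1), (M.card).choose k := by
  intro c
  induction c using Nat.strong_induction_on with
  | _ c IH =>
  intro M H hU hI hκ
  classical
  rcases H.eq_empty_or_nonempty with rfl | ⟨I0, hI0⟩
  · simp
  have htc : t ≤ c := by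
    have h1 := hI I0 hI0 I0 hI0
    rwa [Finset.inter_self, (hU I0 hI0).2] at h1
  have hcm : c ≤ M.card := by
    rw [← (hU I0 hI0).2]; exact Finset.card_le_card (hU I0 hI0).1
  set m := M.card with hm
  set r := c - t with hr
  set T := ∑ k ∈ Finset.range (r + 1), m.choose k with hTdef
  have hT1 : 1 ≤ T := by
    have h0 : m.choose 0 ≤ T :=
      Finset.single_le_sum (f := fun k => m.choose k) (fun _ _ => Nat.zero_le _)
        (Finset.mem_range.mpr (by omega))
    simpa using h0
  have hκr : r + 2 ≤ κ := by omega
  set f : Finset ℕ × Finset ℕ → Finset ℕ × Finset ℕ := fun p => (p.1 \ p.2, p.2 \ p.1) with hf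
  set Q := (H ×ˢ H).image f with hQdef
  have hdecomp : H.card * H.card = ∑ q ∈ Q, ((H ×ˢ H).filter (fun p => f p = q)).card := by
    rw [← Finset.card_product]
    exact Finset.card_eq_sum_card_image f (H ×ˢ H)
  -- properties of nonempty-difference members of Q
  have hQprop : ∀ q ∈ Q, q ≠ (∅, ∅) →
      q.1 ⊆ M ∧ q.2 ⊆ M ∧ Disjoint q.1 q.2 ∧ q.2.card = q.1.card ∧
        1 ≤ q.1.card ∧ q.1.card ≤ r := by
    intro q hq hne
    rcases Finset.mem_image.mp hq with ⟨p, hp, hfp⟩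
    rcases Finset.mem_product.mp hp with ⟨hp1, hp2⟩
    have hc1 : p.1.card = c := (hU _ hp1).2
    have hc2 : p.2.card = c := (hU _ hp2).2
    have hint : t ≤ (p.1 ∩ p.2).card := hI _ hp1 _ hp2
    have hq1 : q.1 = p.1 \ p.2 := by rw [← hfp]
    have hq2 : q.2 = p.2 \ p.1 := by rw [← hfp]
    have hcard1 : q.1.card + (p.1 ∩ p.2).card = c := by
      rw [hq1, ← hc1]; exact Finset.card_sdiff_add_card_inter p.1 p.2
    have hcard2 : q.2.card = q.1.card := by
      rw [hq1, hq2]; exact (Finset.card_sdiff_comm (hc1.trans hc2.symm)).symm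
    have hpos : 1 ≤ q.1.card := by
      rcases Nat.eq_zero_or_pos q.1.card with h0 | h
      · exfalso
        have hq1e : q.1 = ∅ := Finset.card_eq_zero.mp h0
        have hsub : p.1 ⊆ p.2 := by
          rw [hq1] at hq1e; exact Finset.sdiff_eq_empty_iff_subset.mp hq1e
        have heq : p.1 = p.2 := Finset.eq_of_subset_of_card_le hsub (by omega)
        apply hne
        rw [← hfp, hf]
        simp [heq]
      · exact h
    refine ⟨hq1 ▸ Finset.sdiff_subset.trans (hU _ hp1).1,
      hq2 ▸ Finset.sdiff_subset.trans (hU _ hp2).1, ?_, hcard2, hpos, by omega⟩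
    rw [hq1, hq2]; exact disjoint_sdiff_sdiff
  -- bound for the diagonal fiber
  have hdiag : ((H ×ˢ H).filter (fun p => f p = (∅, ∅))).card ≤ H.card := by
    apply Finset.card_le_card_of_injOn (fun p => p.1)
    · intro p hp
      exact (Finset.mem_product.mp (Finset.mem_filter.mp hp).1).1
    · intro p hp p' hp' h1
      rw [Finset.mem_coe] at hp hp'
      replace h1 : p.1 = p'.1 := h1
      have e : ∀ x : Finset ℕ × Finset ℕ, x ∈ (H ×ˢ H).filter (fun p => f p = (∅, ∅)) →
          x.2 = x.1 := by
        intro x hx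
        have hfx := (Finset.mem_filter.mp hx).2
        have e1 : x.1 \ x.2 = ∅ := congrArg Prod.fst hfx
        have e2 : x.2 \ x.1 = ∅ := congrArg Prod.snd hfx
        exact subset_antisymm (Finset.sdiff_eq_empty_iff_subset.mp e2)
          (Finset.sdiff_eq_empty_iff_subset.mp e1)
      have := e p hp
      have := e p' hp'
      exact Prod.ext h1 (by rw [e p hp, e p' hp', h1])
  -- bound for off-diagonal fibers
  set g : ℕ → ℕ := fun j => κ * ∑ k ∈ Finset.range (r - j + 1), (m - 2 * j).choose k with hg
  have hfiber : ∀ q ∈ Q, q ≠ (∅, ∅) →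
      ((H ×ˢ H).filter (fun p => f p = q)).card ≤ g q.1.card := by
    intro q hq hne
    obtain ⟨hS1, hS2, hdisj, hYX, hj1, hjr⟩ := hQprop q hq hne
    set HXY := M.powerset.filter
      (fun J => Disjoint q.1 J ∧ Disjoint q.2 J ∧ q.1 ∪ J ∈ H ∧ q.2 ∪ J ∈ H) with hHXY
    have hinj : ((H ×ˢ H).filter (fun p => f p = q)).card ≤ HXY.card := by
      apply Finset.card_le_card_of_injOn (fun p => p.1 ∩ p.2)
      · intro p hp
        rcases Finset.mem_filter.mp hp with ⟨hpH, hfq⟩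
        rcases Finset.mem_product.mp hpH with ⟨hp1, hp2⟩
        have e1 : p.1 \ p.2 = q.1 := congrArg Prod.fst hfq
        have e2 : p.2 \ p.1 = q.2 := congrArg Prod.snd hfq
        refine Finset.mem_filter.mpr ⟨Finset.mem_powerset.mpr
          (Finset.inter_subset_left.trans (hU _ hp1).1), ?_, ?_, ?_, ?_⟩
        · rw [← e1]
          exact Finset.disjoint_left.mpr
            (fun x hx1 hx2 => (Finset.mem_sdiff.mp hx1).2 (Finset.mem_inter.mp hx2).2)
        · rw [← e2]
          exact Finset.disjoint_left.mpr
            (fun x hx1 hx2 => (Finset.mem_sdiff.mp hx1).2 (Finset.mem_inter.mp hx2).1)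
        · rw [← e1, Finset.sdiff_union_inter]; exact hp1
        · rw [← e2]; beta_reduce; rw [Finset.inter_comm, Finset.sdiff_union_inter]; exact hp2
      · intro p hp p' hp' hpp
        rw [Finset.mem_coe] at hp hp'
        replace hpp : p.1 ∩ p.2 = p'.1 ∩ p'.2 := hpp
        rcases Finset.mem_filter.mp hp with ⟨hpH, hfq⟩
        rcases Finset.mem_filter.mp hp' with ⟨hpH', hfq'⟩
        have e1 : p.1 \ p.2 = q.1 := congrArg Prod.fst hfq
        have e2 : p.2 \ p.1 = q.2 := congrArg Prod.snd hfq
        have e1' : p'.1 \ p'.2 = q.1 := congrArg Prod.fst hfq'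
        have e2' : p'.2 \ p'.1 = q.2 := congrArg Prod.snd hfq'
        have hfst : p.1 = p'.1 := by
          rw [← Finset.sdiff_union_inter p.1 p.2, ← Finset.sdiff_union_inter p'.1 p'.2,
            e1, e1', hpp]
        have hsnd : p.2 = p'.2 := by
          rw [← Finset.sdiff_union_inter p.2 p.1, ← Finset.sdiff_union_inter p'.2 p'.1,
            e2, e2', Finset.inter_comm, hpp, Finset.inter_comm]
        exact Prod.ext hfst hsnd
    set j := q.1.card with hjq
    have hQempty : HXY = ∅ ∨ ∃ J0, J0 ∈ HXY := by
      rcases HXY.eq_empty_or_nonempty with h | ⟨J0, hJ0⟩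
      · exact Or.inl h
      · exact Or.inr ⟨J0, hJ0⟩
    -- apply induction hypothesis to HXY
    have hU' : ∀ J ∈ HXY, J ⊆ M \ (q.1 ∪ q.2) ∧ J.card = c - j := by
      intro J hJ
      rcases Finset.mem_filter.mp hJ with ⟨hJM, hd1, hd2, hm1, _⟩
      constructor
      · rw [Finset.subset_sdiff]
        refine ⟨Finset.mem_powerset.mp hJM, ?_⟩
        rw [Finset.disjoint_union_right]
        exact ⟨disjoint_comm.mp hd1, disjoint_comm.mp hd2⟩
      · have hcu : (q.1 ∪ J).card = c := (hU _ hm1).2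
        rw [Finset.card_union_of_disjoint hd1] at hcu
        omega
    have hI' : ∀ J ∈ HXY, ∀ J' ∈ HXY, t ≤ (J ∩ J').card := by
      intro J hJ J' hJ'
      rcases Finset.mem_filter.mp hJ with ⟨_, hd1, hd2, hm1, _⟩
      rcases Finset.mem_filter.mp hJ' with ⟨_, hd1', hd2', _, hm2'⟩
      have hbig : t ≤ ((q.1 ∪ J) ∩ (q.2 ∪ J')).card := hI _ hm1 _ hm2'
      have hsub : (q.1 ∪ J) ∩ (q.2 ∪ J') ⊆ J ∩ J' := by
        intro x hx
        rcases Finset.mem_inter.mp hx with ⟨hx1, hx2⟩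
        rcases Finset.mem_union.mp hx1 with h1 | h1
        · rcases Finset.mem_union.mp hx2 with h2 | h2
          · exact absurd (Finset.mem_of_mem_inter_left (Finset.mem_inter.mpr ⟨h1, h2⟩))
              (fun _ => (Finset.disjoint_left.mp hdisj h1) h2)
          · exact absurd h2 (Finset.disjoint_left.mp hd1' h1)
        · rcases Finset.mem_union.mp hx2 with h2 | h2
          · exact absurd h1 (Finset.disjoint_left.mp hd2 h2)
          · exact Finset.mem_inter.mpr ⟨h1, h2⟩
      exact le_trans hbig (Finset.card_le_card hsub)
    have hIH := IH (c - j) (by omega) (M \ (q.1 ∪ q.2)) HXY hU' hI' (by omega)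
    have hMcard : (M \ (q.1 ∪ q.2)).card = m - 2 * j := by
      rw [Finset.card_sdiff_of_subset (Finset.union_subset hS1 hS2),
        Finset.card_union_of_disjoint hdisj]
      omega
    have hidx : (c - j) - t = r - j := by omega
    rw [hMcard, hidx] at hIH
    exact le_trans hinj hIH
  -- assemble the fiber decomposition
  set Q' := Q.erase (∅, ∅) with hQ'
  have hsplit : H.card * H.card ≤ H.card + ∑ q ∈ Q', g q.1.card := by
    rw [hdecomp]
    by_cases hmem : ((∅, ∅) : Finset ℕ × Finset ℕ) ∈ Q
    · rw [← Finset.add_sum_erase Q _ hmem]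
      exact Nat.add_le_add hdiag (Finset.sum_le_sum fun q hq =>
        hfiber q (Finset.mem_of_mem_erase hq) (Finset.ne_of_mem_erase hq))
    · have : Q' = Q := Finset.erase_eq_of_notMem hmem
      rw [this]
      have hb : ∑ q ∈ Q, ((H ×ˢ H).filter (fun p => f p = q)).card ≤ ∑ q ∈ Q, g q.1.card := by
        apply Finset.sum_le_sum
        intro q hq
        exact hfiber q hq (fun h => hmem (h ▸ hq))
      omega
  -- group the off-diagonal sum by the size of the first component
  have hgroup : ∑ q ∈ Q', g q.1.card ≤
      ∑ j ∈ Finset.Icc 1 r, m.choose j * (m - j).choose j * g j := by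
    have hmaps : ∀ q ∈ Q', q.1.card ∈ Q'.image (fun q => q.1.card) :=
      fun q hq => Finset.mem_image_of_mem _ hq
    rw [← Finset.sum_fiberwise_of_maps_to' hmaps (fun j => g j)]
    have hstep : ∀ j ∈ Q'.image (fun q => q.1.card),
        ∑ _q ∈ Q'.filter (fun q => q.1.card = j), g j ≤ m.choose j * (m - j).choose j * g j := by
      intro j hj
      rw [Finset.sum_const, smul_eq_mul]
      apply Nat.mul_le_mul_right
      apply pair_count M _ j j
      intro p hp
      rcases Finset.mem_filter.mp hp with ⟨hpQ', hpc⟩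
      obtain ⟨h1, h2, h3, h4, _, _⟩ := hQprop p (Finset.mem_of_mem_erase hpQ')
        (Finset.ne_of_mem_erase hpQ')
      exact ⟨h1, h2, h3, hpc, by rw [h4, hpc]⟩
    calc ∑ j ∈ Q'.image (fun q => q.1.card), ∑ _q ∈ Q'.filter (fun q => q.1.card = j), g j
        ≤ ∑ j ∈ Q'.image (fun q => q.1.card), m.choose j * (m - j).choose j * g j :=
          Finset.sum_le_sum hstep
      _ ≤ ∑ j ∈ Finset.Icc 1 r, m.choose j * (m - j).choose j * g j := by
          apply Finset.sum_le_sum_of_subset_of_nonneg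
          · intro j hj
            rcases Finset.mem_image.mp hj with ⟨q, hq, hqj⟩
            obtain ⟨_, _, _, _, h5, h6⟩ := hQprop q (Finset.mem_of_mem_erase hq)
              (Finset.ne_of_mem_erase hq)
            exact Finset.mem_Icc.mpr ⟨hqj ▸ h5, hqj ▸ h6⟩
          · intro _ _ _; exact Nat.zero_le _
  -- numeric bound for each j
  have hnum : ∀ j ∈ Finset.Icc 1 r, m.choose j * (m - j).choose j * g j ≤ κ * (T * T) := by
    intro j hj
    rcases Finset.mem_Icc.mp hj with ⟨hj1, hjr⟩
    have hee : m.choose j * (m - j).choose j * g j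
        = κ * ∑ k ∈ Finset.range (r - j + 1),
            m.choose j * ((m - j).choose j * (m - 2 * j).choose k) := by
      simp only [hg]
      rw [Finset.mul_sum, Finset.mul_sum, Finset.mul_sum]
      apply Finset.sum_congr rfl
      intro k _
      ring
    rw [hee]
    apply Nat.mul_le_mul_left
    have hone : ∀ k ∈ Finset.range (r - j + 1),
        m.choose j * ((m - j).choose j * (m - 2 * j).choose k) ≤ m.choose (j + k) * T := by
      intro k hk
      have hkk := Finset.mem_range.mp hk
      have hterm := lemA_term m j k (by omega)
      have hT : m.choose (j + k) ≤ T :=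
        Finset.single_le_sum (f := fun k => m.choose k) (fun _ _ => Nat.zero_le _)
          (Finset.mem_range.mpr (by omega))
      calc m.choose j * ((m - j).choose j * (m - 2 * j).choose k)
          ≤ m.choose (j + k) * m.choose (j + k) := hterm
        _ ≤ m.choose (j + k) * T := Nat.mul_le_mul_left _ hT
    calc ∑ k ∈ Finset.range (r - j + 1), m.choose j * ((m - j).choose j * (m - 2 * j).choose k)
        ≤ ∑ k ∈ Finset.range (r - j + 1), m.choose (j + k) * T := Finset.sum_le_sum hone
      _ = (∑ k ∈ Finset.range (r - j + 1), m.choose (j + k)) * T := by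
          rw [Finset.sum_mul]
      _ ≤ T * T := by
          apply Nat.mul_le_mul_right
          have he : ∑ k ∈ Finset.range (r - j + 1), m.choose (j + k)
              = ∑ p ∈ Finset.Ico j (r + 1), m.choose p := by
            rw [Finset.sum_Ico_eq_sum_range]
            have : r + 1 - j = r - j + 1 := by omega
            rw [this]
          rw [he, hTdef]
          apply Finset.sum_le_sum_of_subset_of_nonneg
          · intro p hp
            rcases Finset.mem_Ico.mp hp with ⟨_, h2⟩
            exact Finset.mem_range.mpr h2
          · intro _ _ _; exact Nat.zero_le _
  -- put everything together
  have htot : H.card * H.card ≤ H.card + r * (κ * (T * T)) := by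
    have h1 : ∑ j ∈ Finset.Icc 1 r, m.choose j * (m - j).choose j * g j
        ≤ ∑ _j ∈ Finset.Icc 1 r, κ * (T * T) := Finset.sum_le_sum hnum
    have h2 : ∑ _j ∈ Finset.Icc 1 r, κ * (T * T) = r * (κ * (T * T)) := by
      rw [Finset.sum_const, smul_eq_mul, Nat.card_Icc, Nat.add_sub_cancel]
    omega
  -- final arithmetic
  by_contra hcon
  push_neg at hcon
  have hX : κ * T + 1 ≤ H.card := hcon
  set X := H.card with hXdef
  have h1 : X * (κ * T + 1) ≤ X * X := Nat.mul_le_mul_left X hX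
  have h2 : X * (κ * T) + X ≤ X + r * (κ * (T * T)) := by
    calc X * (κ * T) + X = X * (κ * T + 1) := by ring
      _ ≤ X * X := h1
      _ ≤ X + r * (κ * (T * T)) := htot
  have h3 : X * (κ * T) ≤ (r * T) * (κ * T) := by
    have : r * (κ * (T * T)) = (r * T) * (κ * T) := by ring
    omega
  have h4 : X ≤ r * T := Nat.le_of_mul_le_mul_right h3 (Nat.mul_pos (by omega) (by omega))
  have h5 : (r + 2) * T ≤ κ * T := Nat.mul_le_mul_right T hκr
  have h6 : r * T + 2 * T = (r + 2) * T := by ring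
  omega

lemma main_count (n a b t : ℕ) (ht : 1 ≤ t) (hta : t ≤ a) (htb : t ≤ b)
    (han : a ≤ n) (hbn : b ≤ n) (hst : a + b < n + t)
    (F G : Finset (Finset ℕ)) (hF : UniformOn n a F) (hG : UniformOn n b G)
    (hX : CrossInt t F G) :
    F.card * G.card ≤
      (n + 2) * ((min a b - t + 1) * ((min a b - t + 1) * (2 * n).choose (a + b - 2 * t))) := by
  classical
  set s := a + b - 2 * t with hs
  set D := min a b - t with hD
  have hsn : s ≤ n := by omega
  have hgs : (gs n).card = n := by
    rw [gs, Nat.card_Icc]; omega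
  set f : Finset ℕ × Finset ℕ → Finset ℕ × Finset ℕ := fun p => (p.1 \ p.2, p.2 \ p.1) with hf
  set Q := (F ×ˢ G).image f with hQdef
  have hdecomp : F.card * G.card = ∑ q ∈ Q, ((F ×ˢ G).filter (fun p => f p = q)).card := by
    rw [← Finset.card_product]
    exact Finset.card_eq_sum_card_image f (F ×ˢ G)
  have hQprop : ∀ q ∈ Q, q.1 ⊆ gs n ∧ q.2 ⊆ gs n ∧ Disjoint q.1 q.2 ∧
      ∃ cc, t ≤ cc ∧ q.1.card + cc = a ∧ q.2.card + cc = b ∧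
        q.1.card + q.2.card + cc ≤ n := by
    intro q hq
    rcases Finset.mem_image.mp hq with ⟨p, hp, hfp⟩
    rcases Finset.mem_product.mp hp with ⟨hp1, hp2⟩
    have hA := hF _ hp1
    have hB := hG _ hp2
    have hq1 : q.1 = p.1 \ p.2 := by rw [← hfp]
    have hq2 : q.2 = p.2 \ p.1 := by rw [← hfp]
    have hint : t ≤ (p.1 ∩ p.2).card := hX _ hp1 _ hp2
    have hc1 : q.1.card + (p.1 ∩ p.2).card = a := by
      rw [hq1, ← hA.2]; exact Finset.card_sdiff_add_card_inter p.1 p.2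
    have hc2 : q.2.card + (p.1 ∩ p.2).card = b := by
      rw [hq2, ← hB.2, Finset.inter_comm]
      exact Finset.card_sdiff_add_card_inter p.2 p.1
    have hu : (p.1 ∪ p.2).card + (p.1 ∩ p.2).card = a + b := by
      rw [← hA.2, ← hB.2]; exact Finset.card_union_add_card_inter p.1 p.2
    have hun : (p.1 ∪ p.2).card ≤ n := by
      rw [← hgs]
      exact Finset.card_le_card (Finset.union_subset hA.1 hB.1)
    refine ⟨hq1 ▸ Finset.sdiff_subset.trans hA.1, hq2 ▸ Finset.sdiff_subset.trans hB.1, ?_,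
      (p.1 ∩ p.2).card, hint, hc1, hc2, by omega⟩
    rw [hq1, hq2]; exact disjoint_sdiff_sdiff
  set g : ℕ × ℕ → ℕ := fun ij =>
    (n + 2) * ∑ k ∈ Finset.range ((a - ij.1) - t + 1), (n - (ij.1 + ij.2)).choose k with hg
  have hfiber : ∀ q ∈ Q,
      ((F ×ˢ G).filter (fun p => f p = q)).card ≤ g (q.1.card, q.2.card) := by
    intro q hq
    obtain ⟨hS1, hS2, hdisj, cc, hcct, hcc1, hcc2, hccn⟩ := hQprop q hq
    set HXY := (gs n).powerset.filter
      (fun J => Disjoint q.1 J ∧ Disjoint q.2 J ∧ q.1 ∪ J ∈ F ∧ q.2 ∪ J ∈ G) with hHXY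
    have hinj : ((F ×ˢ G).filter (fun p => f p = q)).card ≤ HXY.card := by
      apply Finset.card_le_card_of_injOn (fun p => p.1 ∩ p.2)
      · intro p hp
        rcases Finset.mem_filter.mp hp with ⟨hpH, hfq⟩
        rcases Finset.mem_product.mp hpH with ⟨hp1, hp2⟩
        have e1 : p.1 \ p.2 = q.1 := congrArg Prod.fst hfq
        have e2 : p.2 \ p.1 = q.2 := congrArg Prod.snd hfq
        refine Finset.mem_filter.mpr ⟨Finset.mem_powerset.mpr
          (Finset.inter_subset_left.trans (hF _ hp1).1), ?_, ?_, ?_, ?_⟩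
        · rw [← e1]
          exact Finset.disjoint_left.mpr
            (fun x hx1 hx2 => (Finset.mem_sdiff.mp hx1).2 (Finset.mem_inter.mp hx2).2)
        · rw [← e2]
          exact Finset.disjoint_left.mpr
            (fun x hx1 hx2 => (Finset.mem_sdiff.mp hx1).2 (Finset.mem_inter.mp hx2).1)
        · rw [← e1, Finset.sdiff_union_inter]; exact hp1
        · rw [← e2]; beta_reduce; rw [Finset.inter_comm, Finset.sdiff_union_inter]; exact hp2
      · intro p hp p' hp' hpp
        rw [Finset.mem_coe] at hp hp'
        replace hpp : p.1 ∩ p.2 = p'.1 ∩ p'.2 := hpp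
        rcases Finset.mem_filter.mp hp with ⟨hpH, hfq⟩
        rcases Finset.mem_filter.mp hp' with ⟨hpH', hfq'⟩
        have e1 : p.1 \ p.2 = q.1 := congrArg Prod.fst hfq
        have e2 : p.2 \ p.1 = q.2 := congrArg Prod.snd hfq
        have e1' : p'.1 \ p'.2 = q.1 := congrArg Prod.fst hfq'
        have e2' : p'.2 \ p'.1 = q.2 := congrArg Prod.snd hfq'
        have hfst : p.1 = p'.1 := by
          rw [← Finset.sdiff_union_inter p.1 p.2, ← Finset.sdiff_union_inter p'.1 p'.2,
            e1, e1', hpp]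
        have hsnd : p.2 = p'.2 := by
          rw [← Finset.sdiff_union_inter p.2 p.1, ← Finset.sdiff_union_inter p'.2 p'.1,
            e2, e2', Finset.inter_comm, hpp, Finset.inter_comm]
        exact Prod.ext hfst hsnd
    have hU' : ∀ J ∈ HXY, J ⊆ gs n \ (q.1 ∪ q.2) ∧ J.card = a - q.1.card := by
      intro J hJ
      rcases Finset.mem_filter.mp hJ with ⟨hJM, hd1, hd2, hm1, _⟩
      constructor
      · rw [Finset.subset_sdiff]
        refine ⟨Finset.mem_powerset.mp hJM, ?_⟩
        rw [Finset.disjoint_union_right]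
        exact ⟨disjoint_comm.mp hd1, disjoint_comm.mp hd2⟩
      · have hcu : (q.1 ∪ J).card = a := (hF _ hm1).2
        rw [Finset.card_union_of_disjoint hd1] at hcu
        omega
    have hI' : ∀ J ∈ HXY, ∀ J' ∈ HXY, t ≤ (J ∩ J').card := by
      intro J hJ J' hJ'
      rcases Finset.mem_filter.mp hJ with ⟨_, hd1, hd2, hm1, _⟩
      rcases Finset.mem_filter.mp hJ' with ⟨_, hd1', hd2', _, hm2'⟩
      have hbig : t ≤ ((q.1 ∪ J) ∩ (q.2 ∪ J')).card := hX _ hm1 _ hm2'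
      have hsub : (q.1 ∪ J) ∩ (q.2 ∪ J') ⊆ J ∩ J' := by
        intro x hx
        rcases Finset.mem_inter.mp hx with ⟨hx1, hx2⟩
        rcases Finset.mem_union.mp hx1 with h1 | h1
        · rcases Finset.mem_union.mp hx2 with h2 | h2
          · exact absurd h2 (Finset.disjoint_left.mp hdisj h1)
          · exact absurd h2 (Finset.disjoint_left.mp hd1' h1)
        · rcases Finset.mem_union.mp hx2 with h2 | h2
          · exact absurd h1 (Finset.disjoint_left.mp hd2 h2)
          · exact Finset.mem_inter.mpr ⟨h1, h2⟩
      exact le_trans hbig (Finset.card_le_card hsub)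
    have hIH := lemA t (n + 2) ht (a - q.1.card) (gs n \ (q.1 ∪ q.2)) HXY hU' hI' (by omega)
    have hMcard : (gs n \ (q.1 ∪ q.2)).card = n - (q.1.card + q.2.card) := by
      rw [Finset.card_sdiff_of_subset (Finset.union_subset hS1 hS2),
        Finset.card_union_of_disjoint hdisj, hgs]
    rw [hMcard] at hIH
    exact le_trans hinj hIH
  -- group by sizes
  set w : Finset ℕ × Finset ℕ → ℕ × ℕ := fun q => (q.1.card, q.2.card) with hw
  have hQw : ∀ q ∈ Q, w q ∈ Q.image w := fun q hq => Finset.mem_image_of_mem _ hq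
  have hsum1 : F.card * G.card ≤ ∑ q ∈ Q, g (w q) := by
    rw [hdecomp]
    exact Finset.sum_le_sum (fun q hq => hfiber q hq)
  have hsum2 : ∑ q ∈ Q, g (w q) = ∑ ij ∈ Q.image w, ∑ _q ∈ Q.filter (fun q => w q = ij), g ij :=
    (Finset.sum_fiberwise_of_maps_to' hQw g).symm
  -- bound each group
  have hgroup : ∀ ij ∈ Q.image w,
      ∑ _q ∈ Q.filter (fun q => w q = ij), g ij ≤
        (n + 2) * ((D + 1) * (2 * n).choose s) := by
    intro ij hij
    rcases Finset.mem_image.mp hij with ⟨q0, hq0, hq0ij⟩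
    obtain ⟨_, _, _, cc, hcct, hcc1, hcc2, hccn⟩ := hQprop q0 hq0
    have hij1 : ij.1 = q0.1.card := by rw [← hq0ij]
    have hij2 : ij.2 = q0.2.card := by rw [← hq0ij]
    rw [Finset.sum_const, smul_eq_mul]
    have hcount : (Q.filter (fun q => w q = ij)).card ≤ n.choose ij.1 * (n - ij.1).choose ij.2 := by
      have := pair_count (gs n) (Q.filter (fun q => w q = ij)) ij.1 ij.2 ?_
      · rwa [hgs] at this
      · intro p hp
        rcases Finset.mem_filter.mp hp with ⟨hpQ, hpij⟩
        obtain ⟨h1, h2, h3, _⟩ := hQprop p hpQ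
        have hp1 : p.1.card = ij.1 := by rw [← hpij]
        have hp2 : p.2.card = ij.2 := by rw [← hpij]
        exact ⟨h1, h2, h3, hp1, hp2⟩
    have hterm : n.choose ij.1 * (n - ij.1).choose ij.2 * g ij ≤
        (n + 2) * ((cc - t + 1) * (2 * n).choose s) := by
      simp only [hg]
      rw [Finset.mul_sum, Finset.mul_sum]
      have : ∀ k ∈ Finset.range ((a - ij.1) - t + 1),
          n.choose ij.1 * (n - ij.1).choose ij.2 * ((n + 2) * (n - (ij.1 + ij.2)).choose k)
            ≤ (n + 2) * (2 * n).choose s := by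
        intro k hk
        have hkk := Finset.mem_range.mp hk
        have hai : a - ij.1 = cc := by omega
        have hmt := main_term n ij.1 ij.2 k s (by omega) (by omega) hsn
        have hcast : n - (ij.1 + ij.2) = (n - ij.1) - ij.2 := by omega
        calc n.choose ij.1 * (n - ij.1).choose ij.2 * ((n + 2) * (n - (ij.1 + ij.2)).choose k)
            = (n + 2) * (n.choose ij.1 * ((n - ij.1).choose ij.2 * ((n - ij.1) - ij.2).choose k)) := by
              rw [hcast]; ring
          _ ≤ (n + 2) * (2 * n).choose s := Nat.mul_le_mul_left _ hmt
      calc ∑ k ∈ Finset.range ((a - ij.1) - t + 1),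
            n.choose ij.1 * (n - ij.1).choose ij.2 * ((n + 2) * (n - (ij.1 + ij.2)).choose k)
          ≤ ∑ _k ∈ Finset.range ((a - ij.1) - t + 1), (n + 2) * (2 * n).choose s :=
            Finset.sum_le_sum this
        _ = ((a - ij.1) - t + 1) * ((n + 2) * (2 * n).choose s) := by
            rw [Finset.sum_const, smul_eq_mul, Finset.card_range]
        _ ≤ (cc - t + 1) * ((n + 2) * (2 * n).choose s) := by
            have hai : a - ij.1 = cc := by omega
            rw [hai]
        _ = (n + 2) * ((cc - t + 1) * (2 * n).choose s) := by ring
    have hccD : cc - t + 1 ≤ D + 1 := by omega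
    calc (Q.filter (fun q => w q = ij)).card * g ij
        ≤ n.choose ij.1 * (n - ij.1).choose ij.2 * g ij :=
          Nat.mul_le_mul_right _ hcount
      _ ≤ (n + 2) * ((cc - t + 1) * (2 * n).choose s) := hterm
      _ ≤ (n + 2) * ((D + 1) * (2 * n).choose s) := by
          apply Nat.mul_le_mul_left
          exact Nat.mul_le_mul_right _ hccD
  -- number of groups
  have himg : (Q.image w).card ≤ D + 1 := by
    have hsub : Q.image w ⊆ (Finset.Icc (a - min a b) (a - t)).image (fun i => (i, b - (a - i))) := by
      intro ij hij
      rcases Finset.mem_image.mp hij with ⟨q0, hq0, hq0ij⟩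
      obtain ⟨_, _, _, cc, hcct, hcc1, hcc2, _⟩ := hQprop q0 hq0
      have hij1 : ij.1 = q0.1.card := by rw [← hq0ij]
      have hij2 : ij.2 = q0.2.card := by rw [← hq0ij]
      apply Finset.mem_image.mpr
      refine ⟨ij.1, Finset.mem_Icc.mpr ⟨by omega, by omega⟩, ?_⟩
      have : b - (a - ij.1) = ij.2 := by omega
      rw [this]
    calc (Q.image w).card ≤ ((Finset.Icc (a - min a b) (a - t)).image (fun i => (i, b - (a - i)))).card :=
          Finset.card_le_card hsub
      _ ≤ (Finset.Icc (a - min a b) (a - t)).card := Finset.card_image_le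
      _ = D + 1 := by rw [Nat.card_Icc]; omega
  calc F.card * G.card ≤ ∑ q ∈ Q, g (w q) := hsum1
    _ = ∑ ij ∈ Q.image w, ∑ _q ∈ Q.filter (fun q => w q = ij), g ij := hsum2
    _ ≤ ∑ _ij ∈ Q.image w, (n + 2) * ((D + 1) * (2 * n).choose s) := Finset.sum_le_sum hgroup
    _ = (Q.image w).card * ((n + 2) * ((D + 1) * (2 * n).choose s)) := by
        rw [Finset.sum_const, smul_eq_mul]
    _ ≤ (D + 1) * ((n + 2) * ((D + 1) * (2 * n).choose s)) :=
        Nat.mul_le_mul_right _ himg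
    _ = (n + 2) * ((D + 1) * ((D + 1) * (2 * n).choose s)) := by ring


/-- Proposition, upper bound (a). -/
theorem nprod_entropy_upper_bound (n a b t : ℕ) (hn : 0 < n) (ha : 0 < a) (hb : 0 < b)
    (ht : 0 < t) (han : a ≤ n) (hbn : b ≤ n) (habt : a + b < n + t) :
    (NProd n a b t : ℝ) ≤
      (n : ℝ) ^ 3 *
        Real.exp (2 * Real.binEntropy (((a : ℝ) + b - 2 * t) / (2 * n)) * n) := by
  have hSne : {x : ℕ | ∃ F G : Finset (Finset ℕ),
      UniformOn n a F ∧ UniformOn n b G ∧ CrossInt t F G ∧ x = F.card * G.card}.Nonempty := by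
    refine ⟨0, ∅, ∅, ?_, ?_, ?_, by simp⟩
    · intro A hA; exact absurd hA (Finset.notMem_empty A)
    · intro A hA; exact absurd hA (Finset.notMem_empty A)
    · intro A hA; exact absurd hA (Finset.notMem_empty A)
  by_cases htab : t ≤ a ∧ t ≤ b
  · obtain ⟨hta, htb⟩ := htab
    set s := a + b - 2 * t with hs
    set D := min a b - t with hD
    have hn2 : 2 ≤ n := by omega
    have hsn : s + 2 ≤ n := by omega
    -- natural number bound
    have harith : (n + 2) * ((D + 1) * ((D + 1) * (2 * n).choose s)) ≤
        n ^ 3 * (2 * n).choose s := by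
      have h2D : 2 * (D + 1) ≤ n := by omega
      have hkey : (n + 2) * ((D + 1) * (D + 1)) ≤ n ^ 3 := by
        obtain ⟨v, hv⟩ : ∃ v, n = 2 * (D + 1) + v := ⟨n - 2 * (D + 1), by omega⟩
        set u := D + 1 with hu
        have hu1 : 1 ≤ u := by omega
        subst hv
        have h6 : u * u ≤ u * u * u := by
          have := Nat.mul_le_mul_left (u * u) hu1
          simpa using this
        calc (2 * u + v + 2) * (u * u)
            = 2 * (u * u * u) + (u * u) * v + 2 * (u * u) := by ring
          _ ≤ 8 * (u * u * u) + 12 * ((u * u) * v) + 6 * (u * (v * v)) + v * v * v := by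
              have h7 : 2 * (u * u * u) + (u * u) * v + 2 * (u * u) ≤
                  8 * (u * u * u) + 12 * ((u * u) * v) + 6 * (u * (v * v)) + v * v * v := by
                have e1 : (0:ℕ) ≤ (u * u) * v := Nat.zero_le _
                have e2 : (0:ℕ) ≤ u * (v * v) := Nat.zero_le _
                have e3 : (0:ℕ) ≤ v * v * v := Nat.zero_le _
                omega
              exact h7
          _ = (2 * u + v) ^ 3 := by ring
      calc (n + 2) * ((D + 1) * ((D + 1) * (2 * n).choose s))
          = ((n + 2) * ((D + 1) * (D + 1))) * (2 * n).choose s := by ring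
        _ ≤ n ^ 3 * (2 * n).choose s := Nat.mul_le_mul_right _ hkey
    have hNle : NProd n a b t ≤ n ^ 3 * (2 * n).choose s := by
      apply csSup_le hSne
      rintro x ⟨F, G, hF, hG, hX, rfl⟩
      exact le_trans (main_count n a b t ht hta htb han hbn habt F G hF hG hX) harith
    -- real part
    have hcast : ((NProd n a b t : ℕ) : ℝ) ≤ (n : ℝ) ^ 3 * ((2 * n).choose s : ℝ) := by
      have := (Nat.cast_le (α := ℝ)).mpr hNle
      push_cast at this
      convert this using 2 <;> push_cast <;> ring
    have hexp : ((2 * n).choose s : ℝ) ≤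
        Real.exp (2 * Real.binEntropy (((a : ℝ) + b - 2 * t) / (2 * n)) * n) := by
      have h1 := choose_le_exp_binEntropy (2 * n) s (by omega) (by omega)
      have h2 : ((s : ℕ) : ℝ) / ((2 * n : ℕ) : ℝ) = ((a : ℝ) + b - 2 * t) / (2 * n) := by
        have h2t : 2 * t ≤ a + b := by omega
        rw [hs]
        rw [Nat.cast_sub h2t]
        push_cast
        ring_nf
      have h3 : ((2 * n : ℕ) : ℝ) * Real.binEntropy (((s : ℕ) : ℝ) / ((2 * n : ℕ) : ℝ))
          = 2 * Real.binEntropy (((a : ℝ) + b - 2 * t) / (2 * n)) * n := by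
        rw [h2]
        push_cast
        ring
      rwa [h3] at h1
    calc ((NProd n a b t : ℕ) : ℝ) ≤ (n : ℝ) ^ 3 * ((2 * n).choose s : ℝ) := hcast
      _ ≤ (n : ℝ) ^ 3 *
          Real.exp (2 * Real.binEntropy (((a : ℝ) + b - 2 * t) / (2 * n)) * n) := by
        apply mul_le_mul_of_nonneg_left hexp (by positivity)
  · -- degenerate case : no nonempty cross-t-intersecting pair exists
    have hzero : NProd n a b t ≤ 0 := by
      apply csSup_le hSne
      rintro x ⟨F, G, hF, hG, hX, rfl⟩
      rcases F.eq_empty_or_nonempty with rfl | ⟨A, hA⟩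
      · simp
      rcases G.eq_empty_or_nonempty with rfl | ⟨B, hB⟩
      · simp
      exfalso
      have h1 : t ≤ (A ∩ B).card := hX A hA B hB
      have h2 : (A ∩ B).card ≤ a := by
        rw [← (hF A hA).2]
        exact Finset.card_le_card Finset.inter_subset_left
      have h3 : (A ∩ B).card ≤ b := by
        rw [← (hG B hB).2]
        exact Finset.card_le_card Finset.inter_subset_right
      omega
    have : (NProd n a b t : ℝ) ≤ 0 := by exact_mod_cast hzero
    refine le_trans this ?_
    positivity
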